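/- arXiv:1711.09770 — 2 statements merged into one kernel-verified Lean document; each statement's English description precedes it below -/
import Mathlib

section
/- Let ξ, η ∈ ℝⁿ with |ξ| = 1 and ξ·η = 0, let k ∈ ℤ + 1/2, let l = c·(1, -(2πk/|η|²)η) ∈ ℝ^{1+n} for some constant c ∈ ℝ, and define τ = sqrt(|η|²/4 + π²k² + |l|²). Set ζ₁ = (iπk, -τξ + iη/2) + il. Then ζ₁·ζ₁ = 0, where the dot product is the bilinear product Σ ζⱼ². -/
open Complex Real

/-- with l = c·(1, -(2πk/|η|²)η) and τ = sqrt(|η|²/4 + π²k² + |l|²),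
the vector ζ₁ = (iπk, -τξ + iη/2) + il satisfies ζ₁·ζ₁ = 0 (bilinear dot product). -/
theorem stmt1 (n : ℕ) (ξ η : EuclideanSpace ℝ (Fin n)) (hξ : ‖ξ‖ = 1)
    (hη : η ≠ 0) (hξη : inner ℝ ξ η = (0 : ℝ))
    (k : ℝ) (hk : ∃ m : ℤ, k = m + 1/2) (c : ℝ)
    (l : ℝ × (Fin n → ℝ))
    (hl : l = (c, fun j => c * (-(2 * π * k / ‖η‖^2) * η j)))
    (τ : ℝ) (hτ : τ = Real.sqrt (‖η‖^2/4 + π^2 * k^2 + (l.1^2 + ∑ j, (l.2 j)^2)))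
    (ζ₁ : ℂ × (Fin n → ℂ))
    (hζ₁ : ζ₁ = (Complex.I * π * k + Complex.I * l.1,
      fun j => -τ * ξ j + Complex.I * (η j) / 2 + Complex.I * (l.2 j))) :
    ζ₁.1 ^ 2 + ∑ j, (ζ₁.2 j) ^ 2 = 0 := by
  have hη2 : ‖η‖ ≠ 0 := norm_ne_zero_iff.mpr hη
  have hsξ : ∑ j, ξ j ^ 2 = 1 := by
    have h := EuclideanSpace.norm_eq ξ
    rw [hξ] at h
    have h0 : (0:ℝ) ≤ ∑ j, ξ j ^ 2 := Finset.sum_nonneg fun j _ => sq_nonneg _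
    have := Real.sqrt_eq_one.mp h.symm
    simpa [sq_abs] using this
  have hsη : ∑ j, η j ^ 2 = ‖η‖ ^ 2 := by
    have h := EuclideanSpace.norm_eq η
    have h0 : (0:ℝ) ≤ ∑ j, η j ^ 2 := Finset.sum_nonneg fun j _ => sq_nonneg _
    rw [h, Real.sq_sqrt]
    · simp [sq_abs]
    · simpa [sq_abs] using h0
  have hsξη : ∑ j, ξ j * η j = 0 := by
    have := hξη
    rw [PiLp.inner_apply] at this
    simpa [mul_comm] using this
  subst hζ₁ hl
  simp only at hτ ⊢
  set d : ℝ := 1/2 - 2*π*k*c/‖η‖^2 with hd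
  have hl2 : ∀ j, c * (-(2 * π * k / ‖η‖^2) * η j) = (d - 1/2) * η j := by
    intro j; rw [hd]; ring
  have hτ2 : τ^2 = ‖η‖^2/4 + π^2*k^2 + c^2 + (d - 1/2)^2 * ‖η‖^2 := by
    have hsq : ∀ j, (c * (-(2 * π * k / ‖η‖^2) * η j))^2 = (d-1/2)^2 * η j ^2 := by
      intro j; rw [hl2 j]; ring
    rw [hτ, Real.sq_sqrt]
    · rw [Finset.sum_congr rfl fun j _ => hsq j, ← Finset.mul_sum, hsη]
      ring
    · positivity
  have key : ∀ j : Fin n, (-(τ:ℂ) * ((ξ j : ℝ):ℂ) + Complex.I * ((η j : ℝ):ℂ) / 2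
      + Complex.I * ((c * (-(2 * π * k / ‖η‖^2) * η j) : ℝ) : ℂ)) ^ 2
      = ((τ^2 * ξ j^2 - d^2 * η j^2 : ℝ) : ℂ)
        + Complex.I * ((-2*τ*d*(ξ j * η j) : ℝ) : ℂ) := by
    intro j
    rw [hl2 j]
    push_cast
    ring_nf
    rw [Complex.I_sq]
    push_cast
    ring
  have hsum : ∑ j, (-(τ:ℂ) * ((ξ j : ℝ):ℂ) + Complex.I * ((η j : ℝ):ℂ) / 2
      + Complex.I * ((c * (-(2 * π * k / ‖η‖^2) * η j) : ℝ) : ℂ)) ^ 2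
      = (((τ^2 - d^2 * ‖η‖^2 : ℝ)) : ℂ) := by
    rw [Finset.sum_congr rfl fun j _ => key j, Finset.sum_add_distrib,
      ← Finset.mul_sum, ← Complex.ofReal_sum, ← Complex.ofReal_sum]
    have h1 : ∑ j, (τ^2 * ξ j^2 - d^2 * η j^2) = τ^2 - d^2 * ‖η‖^2 := by
      rw [Finset.sum_sub_distrib, ← Finset.mul_sum, ← Finset.mul_sum, hsξ, hsη]
      ring
    have h2 : ∑ j, -2*τ*d*(ξ j * η j) = 0 := by
      rw [← Finset.mul_sum, hsξη, mul_zero]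
    rw [h1, h2]
    simp
  rw [hsum]
  have h3 : ((τ^2 - d^2 * ‖η‖^2 : ℝ) : ℂ) = (((π*k+c)^2 : ℝ) : ℂ) := by
    norm_cast
    rw [hτ2, hd]
    field_simp
    ring
  rw [h3]
  push_cast
  ring_nf
  rw [Complex.I_sq]
  ring
end

section
/- Let f: ℝ^{1+n} → ℝ be bounded with ‖f‖_∞ ≤ M and suppose that for all y ∈ ℝ^{1+n} with |y| < δ we have ‖f(·+y) - f‖_{L¹} ≤ C|y|^α for some α ∈ (0,1] and the Fourier transform f̂ is well defined (f ∈ L¹). Then there exist constants C', ε₀ > 0 such that for all 0 < ε < ε₀ and all ρ ∈ ℝ^{1+n}: |f̂(ρ)| ≤ C'(exp(-ε²|ρ|²/(4π)) + ε^α). -/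
open MeasureTheory Real FourierTransform

/-- Key estimate: for large frequencies, the Fourier transform decays like `‖ρ‖⁻ᵅ`,
via the half-period translation trick. -/
lemma stmt5_key (n : ℕ) (f : EuclideanSpace ℝ (Fin (1+n)) → ℂ)
    (hint : Integrable f)
    (δ : ℝ) (hδ : 0 < δ) (C : ℝ) (α : ℝ)
    (hmod : ∀ y : EuclideanSpace ℝ (Fin (1+n)), ‖y‖ < δ →
      ∫ x, ‖f (x + y) - f x‖ ≤ C * ‖y‖ ^ α)
    (ρ : EuclideanSpace ℝ (Fin (1+n))) (hρ : 1 / (2*δ) < ‖ρ‖) :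
    ‖𝓕 f ρ‖ ≤ C / 2 * (1 / (2 * ‖ρ‖)) ^ α := by
  have hρpos : 0 < ‖ρ‖ := lt_of_le_of_lt (by positivity) hρ
  set y : EuclideanSpace ℝ (Fin (1+n)) := ((2 * ‖ρ‖^2)⁻¹ : ℝ) • ρ with hy
  have hny : ‖y‖ = 1 / (2 * ‖ρ‖) := by
    rw [hy, norm_smul, Real.norm_eq_abs, abs_of_nonneg (by positivity)]
    field_simp
  have hnyδ : ‖y‖ < δ := by
    rw [hny]
    rw [div_lt_iff₀ (by positivity)] at hρ ⊢
    nlinarith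
  have hinner : (inner ℝ y ρ : ℝ) = 1/2 := by
    rw [hy, real_inner_smul_left, real_inner_self_eq_norm_sq]
    field_simp
  -- translation identity: 𝓕 (f ∘ (· + y)) ρ = - 𝓕 f ρ
  have htrans : 𝓕 (f ∘ fun v => v + y) ρ = - 𝓕 f ρ := by
    have := VectorFourier.fourierIntegral_comp_add_right (𝕜 := ℝ)
      (V := EuclideanSpace ℝ (Fin (1+n))) (W := EuclideanSpace ℝ (Fin (1+n)))
      𝐞 volume (innerₗ _) f y
    have h2 : 𝓕 (f ∘ fun v => v + y) ρ
        = 𝐞 ((innerₗ (EuclideanSpace ℝ (Fin (1+n))) y) ρ) • 𝓕 f ρ := by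
      change VectorFourier.fourierIntegral 𝐞 volume (innerₗ _) (f ∘ fun v => v + y) ρ = _
      rw [this]
      rfl
    rw [h2]
    have h3 : (innerₗ (EuclideanSpace ℝ (Fin (1+n))) y) ρ = (1/2 : ℝ) := hinner
    rw [h3]
    have h4 : (𝐞 ((1:ℝ)/2) : Circle) • (𝓕 f ρ) = ((𝐞 ((1:ℝ)/2) : Circle) : ℂ) * 𝓕 f ρ :=
      rfl
    rw [h4]
    have h5 : ((𝐞 ((1:ℝ)/2) : Circle) : ℂ) = -1 := by
      rw [Real.fourierChar_apply]
      rw [show (2 * π * (1/2 : ℝ) : ℝ) = π by ring]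
      simpa using Complex.exp_pi_mul_I
    rw [h5]; ring
  -- difference bound
  have hint2 : Integrable (f ∘ fun v => v + y) := hint.comp_add_right y
  have hdiff : 𝓕 f ρ - 𝓕 (f ∘ fun v => v + y) ρ
      = ∫ x, 𝐞 (-(inner ℝ x ρ : ℝ)) • (f x - f (x + y)) := by
    rw [Real.fourier_eq, Real.fourier_eq]
    rw [← integral_sub ((Real.fourierIntegral_convergent_iff ρ).2 hint)
      ((Real.fourierIntegral_convergent_iff ρ).2 hint2)]
    congr 1 with x
    simp [smul_sub, Function.comp]
  have hbound : ‖𝓕 f ρ - 𝓕 (f ∘ fun v => v + y) ρ‖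
      ≤ C * ‖y‖ ^ α := by
    rw [hdiff]
    refine le_trans (norm_integral_le_integral_norm _) ?_
    have : ∀ x, ‖(𝐞 (-(inner ℝ x ρ : ℝ)) : Circle) • (f x - f (x + y))‖
        = ‖f (x + y) - f x‖ := by
      intro x
      rw [Circle.norm_smul, norm_sub_rev]
    calc ∫ x, ‖(𝐞 (-(inner ℝ x ρ : ℝ)) : Circle) • (f x - f (x + y))‖
        = ∫ x, ‖f (x + y) - f x‖ := by simp_rw [this]
      _ ≤ C * ‖y‖ ^ α := hmod y hnyδ
  rw [htrans, sub_neg_eq_add] at hbound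
  have h2norm : ‖𝓕 f ρ + 𝓕 f ρ‖ = 2 * ‖𝓕 f ρ‖ := by
    rw [← two_smul ℝ (𝓕 f ρ), norm_smul]
    simp
  rw [h2norm, hny] at hbound
  linarith

/-- Fourier decay estimate for bounded, integrable functions with an
L¹ Hölder modulus of continuity (Heck–Wang Lemma 2.1). -/
theorem stmt5 (n : ℕ) (f : EuclideanSpace ℝ (Fin (1+n)) → ℂ)
    (hint : Integrable f) (M : ℝ) (hM : ∀ x, ‖f x‖ ≤ M)
    (δ : ℝ) (hδ : 0 < δ) (C : ℝ) (α : ℝ) (hα : α ∈ Set.Ioc (0:ℝ) 1)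
    (hmod : ∀ y : EuclideanSpace ℝ (Fin (1+n)), ‖y‖ < δ →
      ∫ x, ‖f (x + y) - f x‖ ≤ C * ‖y‖ ^ α) :
    ∃ C' ε₀ : ℝ, 0 < C' ∧ 0 < ε₀ ∧ ∀ ε : ℝ, 0 < ε → ε < ε₀ →
      ∀ ρ : EuclideanSpace ℝ (Fin (1+n)),
        ‖𝓕 f ρ‖ ≤ C' * (Real.exp (-(ε^2 * ‖ρ‖^2) / (4 * π)) + ε ^ α) := by
  obtain ⟨hα0, hα1⟩ := hα
  -- C is nonnegative
  have hC0 : 0 ≤ C := by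
    set y₀ : EuclideanSpace ℝ (Fin (1+n)) :=
      EuclideanSpace.single (⟨0, by omega⟩ : Fin (1+n)) (δ/2) with hy₀
    have hny₀ : ‖y₀‖ = δ/2 := by
      rw [hy₀, EuclideanSpace.norm_single, Real.norm_eq_abs, abs_of_pos (by linarith)]
    have h1 : (0:ℝ) ≤ ∫ x, ‖f (x + y₀) - f x‖ :=
      integral_nonneg fun x => norm_nonneg _
    have h2 := hmod y₀ (by rw [hny₀]; linarith)
    rw [hny₀] at h2
    have hpow : (0:ℝ) < (δ/2) ^ α := Real.rpow_pos_of_pos (by linarith) α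
    nlinarith
  set I : ℝ := ∫ x, ‖f x‖ with hI
  have hI0 : 0 ≤ I := integral_nonneg fun x => norm_nonneg _
  refine ⟨Real.exp 1 * (I + 1) + C / 2, min 1 (2*δ), by positivity, by positivity,
    fun ε hε hεlt ρ => ?_⟩
  have hε1 : ε < 1 := lt_of_lt_of_le hεlt (min_le_left _ _)
  have hε2δ : ε < 2*δ := lt_of_lt_of_le hεlt (min_le_right _ _)
  have hεα : (0:ℝ) ≤ ε ^ α := Real.rpow_nonneg hε.le α
  have hexp0 : (0:ℝ) ≤ Real.exp (-(ε^2 * ‖ρ‖^2) / (4 * π)) := (Real.exp_pos _).le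
  by_cases hcase : ε * ‖ρ‖ ≤ 1
  · -- small frequency: use trivial L¹ bound
    have hFle : ‖𝓕 f ρ‖ ≤ I :=
      VectorFourier.norm_fourierIntegral_le_integral_norm 𝐞 volume (innerₗ _) f ρ
    have hexp : Real.exp (-1 : ℝ) ≤ Real.exp (-(ε^2 * ‖ρ‖^2) / (4 * π)) := by
      apply Real.exp_le_exp.2
      have h2 : ε^2 * ‖ρ‖^2 ≤ 1 := by
        nlinarith [mul_nonneg hε.le (norm_nonneg ρ)]
      have hπ : (1:ℝ) ≤ 4 * π := by nlinarith [Real.pi_gt_three]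
      rw [neg_div, neg_le_neg_iff, div_le_one (by positivity)]
      linarith
    calc ‖𝓕 f ρ‖ ≤ I := hFle
      _ = (Real.exp 1 * I) * Real.exp (-1 : ℝ) := by
          rw [mul_comm (Real.exp 1) I, mul_assoc, ← Real.exp_add]
          simp
      _ ≤ (Real.exp 1 * (I + 1) + C / 2) * Real.exp (-(ε^2 * ‖ρ‖^2) / (4 * π)) := by
          apply mul_le_mul _ hexp (Real.exp_pos _).le _
          · nlinarith [Real.exp_pos (1:ℝ)]
          · positivity
      _ ≤ (Real.exp 1 * (I + 1) + C / 2) *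
            (Real.exp (-(ε^2 * ‖ρ‖^2) / (4 * π)) + ε ^ α) := by
          apply mul_le_mul_of_nonneg_left _ (by positivity)
          linarith
  · -- large frequency: use the Hölder decay
    push_neg at hcase
    have hρpos : 0 < ‖ρ‖ := by
      rcases (norm_nonneg ρ).lt_or_eq with h | h
      · exact h
      · exfalso; rw [← h] at hcase; simp at hcase; linarith
    have hρlarge : 1 / (2*δ) < ‖ρ‖ := by
      rw [div_lt_iff₀ (by positivity)]
      have : 1 < ε * ‖ρ‖ := hcase
      nlinarith
    have hkey := stmt5_key n f hint δ hδ C α hmod ρ hρlarge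
    have hmono : (1 / (2 * ‖ρ‖)) ^ α ≤ ε ^ α := by
      apply Real.rpow_le_rpow (by positivity) _ hα0.le
      rw [div_le_iff₀ (by positivity)]
      nlinarith
    calc ‖𝓕 f ρ‖ ≤ C / 2 * (1 / (2 * ‖ρ‖)) ^ α := hkey
      _ ≤ C / 2 * ε ^ α := by
          apply mul_le_mul_of_nonneg_left hmono (by linarith)
      _ ≤ (Real.exp 1 * (I + 1) + C / 2) * (Real.exp (-(ε^2 * ‖ρ‖^2) / (4 * π)) + ε ^ α) := by
          have h1 : C / 2 ≤ Real.exp 1 * (I + 1) + C / 2 := by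
            nlinarith [Real.exp_pos (1:ℝ), hI0]
          have h2 : ε ^ α ≤ Real.exp (-(ε^2 * ‖ρ‖^2) / (4 * π)) + ε ^ α := by linarith
          apply mul_le_mul h1 h2 hεα
          positivity
end
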